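/- (Optimality on the line.) Let ε ≥ 0, 0 ≤ δ ≤ 1, n ∈ ℕ, and let m be a distribution on V. For every (ε,δ)-DP mechanism M' on the n-line with boundary condition M'(0) = m, one has M'(d) ⪯ T_{ε,δ}^d(m) for every 0 ≤ d ≤ n. -/

import Mathlib

open Finset

/-- Prefix sum `s_k = p_1 + ⋯ + p_k` (0-indexed internally: sum of entries with index `< k`). -/
noncomputable def prefixSum (q : ℕ) (p : Fin q → ℝ) (k : ℕ) : ℝ :=
  ∑ i ∈ Finset.univ.filter (fun i : Fin q => (i : ℕ) < k), p i

/-- `p` is a probability distribution on `V = {1, …, q}`. -/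
def IsDist (q : ℕ) (p : Fin q → ℝ) : Prop :=
  (∀ k, 0 ≤ p k) ∧ ∑ k, p k = 1

/-- The modified prefix sums `s'_k` defining the operator `T_{ε,δ}`:
`s'_0 = 0` and `s'_k = min {1, min {e^ε s_k, 1 - e^{-ε} (1 - s_k)} + δ}` for `k ≥ 1`. -/
noncomputable def sPrime (ε δ : ℝ) (q : ℕ) (p : Fin q → ℝ) (k : ℕ) : ℝ :=
  if k = 0 then 0
  else min 1 (min (Real.exp ε * prefixSum q p k)
      (1 - Real.exp (-ε) * (1 - prefixSum q p k)) + δ)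

/-- The operator `T_{ε,δ}`: `(T_{ε,δ} p)_k = s'_k - s'_{k-1}`. -/
noncomputable def Tmap (ε δ : ℝ) (q : ℕ) (p : Fin q → ℝ) : Fin q → ℝ :=
  fun k => sPrime ε δ q p ((k : ℕ) + 1) - sPrime ε δ q p (k : ℕ)

/-- `P` and `Q` are `(ε,δ)`-close: for every `S ⊆ V`,
`P(S) ≤ e^ε Q(S) + δ` and `Q(S) ≤ e^ε P(S) + δ`. -/
def Close (ε δ : ℝ) (q : ℕ) (P Q : Fin q → ℝ) : Prop :=
  ∀ S : Finset (Fin q),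
    (∑ k ∈ S, P k) ≤ Real.exp ε * (∑ k ∈ S, Q k) + δ ∧
    (∑ k ∈ S, Q k) ≤ Real.exp ε * (∑ k ∈ S, P k) + δ

/-- Dominance ordering: `x ⪯ y` iff every prefix sum of `x` is at most that of `y`. -/
def Dom (q : ℕ) (x y : Fin q → ℝ) : Prop :=
  ∀ k : ℕ, k ≤ q → prefixSum q x k ≤ prefixSum q y k

lemma prefixSum_zero (q : ℕ) (p : Fin q → ℝ) : prefixSum q p 0 = 0 := by
  simp [prefixSum]

lemma prefixSum_succ (q : ℕ) (p : Fin q → ℝ) (k : ℕ) (h : k < q) :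
    prefixSum q p (k + 1) = prefixSum q p k + p ⟨k, h⟩ := by
  unfold prefixSum
  have hset : Finset.univ.filter (fun i : Fin q => (i : ℕ) < k + 1) =
      insert ⟨k, h⟩ (Finset.univ.filter (fun i : Fin q => (i : ℕ) < k)) := by
    ext i
    simp [Nat.lt_succ_iff_lt_or_eq, Fin.ext_iff, or_comm]
    omega
  rw [hset, Finset.sum_insert (by simp)]
  ring

lemma prefix_Tmap (ε δ : ℝ) (q : ℕ) (p : Fin q → ℝ) :
    ∀ k : ℕ, k ≤ q → prefixSum q (Tmap ε δ q p) k = sPrime ε δ q p k := by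
  intro k
  induction k with
  | zero => intro _; simp [prefixSum_zero, sPrime]
  | succ k ih =>
    intro hk
    have hkq : k < q := hk
    rw [prefixSum_succ q _ k hkq, ih (le_of_lt hkq)]
    simp [Tmap]

lemma sPrime_mono (ε δ : ℝ) (q : ℕ) (x y : Fin q → ℝ) (k : ℕ)
    (h : prefixSum q x k ≤ prefixSum q y k) :
    sPrime ε δ q x k ≤ sPrime ε δ q y k := by
  unfold sPrime
  by_cases hk : k = 0
  · simp [hk]
  · simp only [hk, if_false]
    have h1 : Real.exp ε * prefixSum q x k ≤ Real.exp ε * prefixSum q y k :=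
      mul_le_mul_of_nonneg_left h (Real.exp_nonneg ε)
    have h2 : 1 - Real.exp (-ε) * (1 - prefixSum q x k) ≤
        1 - Real.exp (-ε) * (1 - prefixSum q y k) := by
      nlinarith [Real.exp_nonneg (-ε)]
    exact min_le_min le_rfl (by linarith [min_le_min h1 h2])

lemma dp_step (ε δ : ℝ) (hε : 0 ≤ ε) (hδ0 : 0 ≤ δ) (q : ℕ) (P Q : Fin q → ℝ)
    (hP : IsDist q P) (hQ : IsDist q Q) (hC : Close ε δ q P Q) (k : ℕ) (hk : k ≤ q) :
    prefixSum q Q k ≤ sPrime ε δ q P k := by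
  unfold sPrime
  by_cases hk0 : k = 0
  · simp [hk0, prefixSum_zero]
  · simp only [hk0, if_false]
    set S := Finset.univ.filter (fun i : Fin q => (i : ℕ) < k) with hS
    have hPS : prefixSum q P k = ∑ i ∈ S, P i := rfl
    have hQS : prefixSum q Q k = ∑ i ∈ S, Q i := rfl
    have hQle1 : ∑ i ∈ S, Q i ≤ 1 := by
      rw [← hQ.2]
      exact Finset.sum_le_sum_of_subset_of_nonneg (Finset.subset_univ S)
        (fun i _ _ => hQ.1 i)
    have h1 : ∑ i ∈ S, Q i ≤ Real.exp ε * (∑ i ∈ S, P i) + δ := (hC S).2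
    have hcompl : ∑ i ∈ Sᶜ, P i ≤ Real.exp ε * (∑ i ∈ Sᶜ, Q i) + δ := (hC Sᶜ).1
    have hPc : ∑ i ∈ Sᶜ, P i = 1 - ∑ i ∈ S, P i := by
      have := Finset.sum_add_sum_compl S P
      rw [hP.2] at this; linarith
    have hQc : ∑ i ∈ Sᶜ, Q i = 1 - ∑ i ∈ S, Q i := by
      have := Finset.sum_add_sum_compl S Q
      rw [hQ.2] at this; linarith
    rw [hPc, hQc] at hcompl
    -- derive Q(S) ≤ 1 - e^{-ε}(1 - P(S)) + δ
    have hexp : Real.exp (-ε) * Real.exp ε = 1 := by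
      rw [← Real.exp_add]; simp
    have hexple : Real.exp (-ε) ≤ 1 := Real.exp_le_one_iff.mpr (by linarith)
    have hexppos : (0:ℝ) < Real.exp (-ε) := Real.exp_pos _
    have h2 : ∑ i ∈ S, Q i ≤ 1 - Real.exp (-ε) * (1 - ∑ i ∈ S, P i) + δ := by
      nlinarith [mul_le_mul_of_nonneg_left hcompl (le_of_lt hexppos)]
    rw [hQS, hPS]
    refine le_min hQle1 ?_
    have hmin : (∑ i ∈ S, Q i) - δ ≤
        min (Real.exp ε * ∑ i ∈ S, P i) (1 - Real.exp (-ε) * (1 - ∑ i ∈ S, P i)) :=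
      le_min (by linarith) (by linarith)
    linarith

/-- optimality on the line: for every `(ε,δ)`-DP mechanism `M'` on the
`n`-line with boundary condition `M'(0) = m`, one has `M'(d) ⪯ T_{ε,δ}^d(m)` for all
`0 ≤ d ≤ n`. -/
theorem line_optimality (q : ℕ) (hq : 1 ≤ q) (ε δ : ℝ) (hε : 0 ≤ ε) (hδ0 : 0 ≤ δ)
    (hδ1 : δ ≤ 1) (n : ℕ) (m : Fin q → ℝ) (hm : IsDist q m)
    (M' : ℕ → Fin q → ℝ)
    (hM'dist : ∀ d : ℕ, d ≤ n → IsDist q (M' d))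
    (hM'dp : ∀ d : ℕ, d + 1 ≤ n → Close ε δ q (M' d) (M' (d + 1)))
    (hM'0 : M' 0 = m) :
    ∀ d : ℕ, d ≤ n → Dom q (M' d) ((Tmap ε δ q)^[d] m) := by
  intro d
  induction d with
  | zero =>
    intro _ k hk
    simp [hM'0]
  | succ d ih =>
    intro hdn k hk
    have hd : d ≤ n := le_of_lt (Nat.lt_of_succ_le hdn)
    have ihd := ih hd
    calc prefixSum q (M' (d + 1)) k
        ≤ sPrime ε δ q (M' d) k :=
          dp_step ε δ hε hδ0 q (M' d) (M' (d + 1)) (hM'dist d hd)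
            (hM'dist (d + 1) hdn) (hM'dp d hdn) k hk
      _ ≤ sPrime ε δ q ((Tmap ε δ q)^[d] m) k :=
          sPrime_mono ε δ q _ _ k (ihd k hk)
      _ = prefixSum q ((Tmap ε δ q)^[d + 1] m) k := by
          rw [Function.iterate_succ_apply']
          exact (prefix_Tmap ε δ q _ k hk).symm
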